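/- arXiv:1604.08448 — 2 statements merged into one kernel-verified Lean document; each statement's English description precedes it below -/
import Mathlib

section
/- Suppose Δz̃_j(x) ≥ 0 for all j ∈ N (local optimality for 1-flips). If x_{j₁} = x_{j₂} = 0 for distinct j₁, j₂, then Δz̃_{j₁,j₂}(x) = Δz̃_{j₁}(x) + Δz̃_{j₂}(x) + Σ_{i ∈ S_{j₁}∩S_{j₂}∩(M_L∪M_E), s_i(x)=b_i−1} w̃_i⁺ + Σ_{i ∈ S_{j₁}∩S_{j₂}∩(M_G∪M_E), s_i(x)=b_i−1} w̃_i⁻, and in particular Δz̃_{j₁,j₂}(x) ≥ 0. -/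
open scoped Classical BigOperators

noncomputable def sLHS {M N : Type*} [Fintype N] (a : M → N → ℝ) (x : N → ℝ) (i : M) : ℝ :=
  ∑ j, a i j * x j

noncomputable def penObj {M N : Type*} [Fintype M] [Fintype N]
    (ML MG ME : Finset M) (a : M → N → ℝ) (b : M → ℕ) (c : N → ℝ)
    (wp wm : M → ℝ) (x : N → ℝ) : ℝ :=
  (∑ j, c j * x j)
    + ∑ i ∈ ML ∪ ME, wp i * max (sLHS a x i - (b i : ℝ)) 0
    + ∑ i ∈ MG ∪ ME, wm i * max ((b i : ℝ) - sLHS a x i) 0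

noncomputable def flipVar {N : Type*} [DecidableEq N] (x : N → ℝ) (j : N) : N → ℝ :=
  Function.update x j (1 - x j)

noncomputable def Sset {M N : Type*} [Fintype M] (a : M → N → ℝ) (j : N) : Finset M :=
  Finset.univ.filter (fun i => a i j = 1)

lemma sLHS_nat' {M N : Type*} [Fintype N] (a : M → N → ℝ) (x : N → ℝ)
    (ha : ∀ i j, a i j = 0 ∨ a i j = 1) (hx : ∀ j, x j = 0 ∨ x j = 1) (i : M) :
    ∃ m : ℕ, sLHS a x i = m := by
  classical
  refine ⟨∑ j, if a i j = 1 ∧ x j = 1 then 1 else 0, ?_⟩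
  rw [sLHS, Nat.cast_sum]
  refine Finset.sum_congr rfl fun j _ => ?_
  rcases ha i j with h | h <;> rcases hx j with h' | h' <;> norm_num [h, h']

lemma sLHS_flip' {M N : Type*} [Fintype N] [DecidableEq N] (a : M → N → ℝ) (x : N → ℝ)
    (j : N) (i : M) :
    sLHS a (flipVar x j) i = sLHS a x i + a i j * (1 - 2 * x j) := by
  classical
  unfold sLHS flipVar
  have h : ∀ j', a i j' * Function.update x j (1 - x j) j'
      = a i j' * x j' + (if j' = j then a i j * (1 - 2 * x j) else 0) := by
    intro j'
    rcases eq_or_ne j' j with rfl | h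
    · simp only [Function.update_self, eq_self_iff_true, if_true]; ring
    · simp [Function.update_of_ne h, h]
  rw [Finset.sum_congr rfl (fun j' _ => h j'), Finset.sum_add_distrib,
    Finset.sum_ite_eq' Finset.univ j]
  simp

lemma key_plus (m bb : ℕ) (w : ℝ) :
    w * (max ((m:ℝ) + 1 + 1 - (bb:ℝ)) 0 - max ((m:ℝ) - (bb:ℝ)) 0)
      = w * (max ((m:ℝ) + 1 - (bb:ℝ)) 0 - max ((m:ℝ) - (bb:ℝ)) 0)
        + w * (max ((m:ℝ) + 1 - (bb:ℝ)) 0 - max ((m:ℝ) - (bb:ℝ)) 0)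
        + (if (m:ℝ) = (bb:ℝ) - 1 then w else 0) := by
  rcases le_or_gt bb m with h | h
  · have h' : (bb:ℝ) ≤ (m:ℝ) := by exact_mod_cast h
    have e1 : max ((m:ℝ) + 1 + 1 - (bb:ℝ)) 0 = (m:ℝ) + 1 + 1 - (bb:ℝ) := max_eq_left (by linarith)
    have e2 : max ((m:ℝ) + 1 - (bb:ℝ)) 0 = (m:ℝ) + 1 - (bb:ℝ) := max_eq_left (by linarith)
    have e3 : max ((m:ℝ) - (bb:ℝ)) 0 = (m:ℝ) - (bb:ℝ) := max_eq_left (by linarith)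
    rw [e1, e2, e3, if_neg (by intro hh; linarith)]
    ring
  · rcases Nat.lt_or_ge (m + 1) bb with h' | h'
    · have hb : (m:ℝ) + 2 ≤ (bb:ℝ) := by exact_mod_cast h'
      have e1 : max ((m:ℝ) + 1 + 1 - (bb:ℝ)) 0 = 0 := max_eq_right (by linarith)
      have e2 : max ((m:ℝ) + 1 - (bb:ℝ)) 0 = 0 := max_eq_right (by linarith)
      have e3 : max ((m:ℝ) - (bb:ℝ)) 0 = 0 := max_eq_right (by linarith)
      rw [e1, e2, e3, if_neg (by intro hh; linarith)]
      ring
    · have hb : bb = m + 1 := le_antisymm h' h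
      have hb' : (bb:ℝ) = (m:ℝ) + 1 := by rw [hb]; push_cast; ring
      have e1 : max ((m:ℝ) + 1 + 1 - (bb:ℝ)) 0 = (m:ℝ) + 1 + 1 - (bb:ℝ) := max_eq_left (by linarith)
      have e2 : max ((m:ℝ) + 1 - (bb:ℝ)) 0 = 0 := max_eq_right (by linarith)
      have e3 : max ((m:ℝ) - (bb:ℝ)) 0 = 0 := max_eq_right (by linarith)
      rw [e1, e2, e3, if_pos (by linarith), hb']
      ring

lemma key_minus (m bb : ℕ) (w : ℝ) :
    w * (max ((bb:ℝ) - ((m:ℝ) + 1 + 1)) 0 - max ((bb:ℝ) - (m:ℝ)) 0)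
      = w * (max ((bb:ℝ) - ((m:ℝ) + 1)) 0 - max ((bb:ℝ) - (m:ℝ)) 0)
        + w * (max ((bb:ℝ) - ((m:ℝ) + 1)) 0 - max ((bb:ℝ) - (m:ℝ)) 0)
        + (if (m:ℝ) = (bb:ℝ) - 1 then w else 0) := by
  rcases le_or_gt bb m with h | h
  · have h' : (bb:ℝ) ≤ (m:ℝ) := by exact_mod_cast h
    have e1 : max ((bb:ℝ) - ((m:ℝ) + 1 + 1)) 0 = 0 := max_eq_right (by linarith)
    have e2 : max ((bb:ℝ) - ((m:ℝ) + 1)) 0 = 0 := max_eq_right (by linarith)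
    have e3 : max ((bb:ℝ) - (m:ℝ)) 0 = 0 := max_eq_right (by linarith)
    rw [e1, e2, e3, if_neg (by intro hh; linarith)]
    ring
  · rcases Nat.lt_or_ge (m + 1) bb with h' | h'
    · have hb : (m:ℝ) + 2 ≤ (bb:ℝ) := by exact_mod_cast h'
      have e1 : max ((bb:ℝ) - ((m:ℝ) + 1 + 1)) 0 = (bb:ℝ) - ((m:ℝ) + 1 + 1) :=
        max_eq_left (by linarith)
      have e2 : max ((bb:ℝ) - ((m:ℝ) + 1)) 0 = (bb:ℝ) - ((m:ℝ) + 1) := max_eq_left (by linarith)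
      have e3 : max ((bb:ℝ) - (m:ℝ)) 0 = (bb:ℝ) - (m:ℝ) := max_eq_left (by linarith)
      rw [e1, e2, e3, if_neg (by intro hh; linarith)]
      ring
    · have hb : bb = m + 1 := le_antisymm h' h
      have hb' : (bb:ℝ) = (m:ℝ) + 1 := by rw [hb]; push_cast; ring
      have e1 : max ((bb:ℝ) - ((m:ℝ) + 1 + 1)) 0 = 0 := max_eq_right (by linarith)
      have e2 : max ((bb:ℝ) - ((m:ℝ) + 1)) 0 = 0 := max_eq_right (by linarith)
      have e3 : max ((bb:ℝ) - (m:ℝ)) 0 = (bb:ℝ) - (m:ℝ) := max_eq_left (by linarith)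
      rw [e1, e2, e3, if_pos (by linarith), hb']
      ring

theorem stmt_6 {M N : Type*} [Fintype M] [Fintype N] [DecidableEq N]
    (ML MG ME : Finset M) (a : M → N → ℝ) (b : M → ℕ) (c : N → ℝ)
    (wp wm : M → ℝ)
    (ha : ∀ i j, a i j = 0 ∨ a i j = 1)
    (hwp : ∀ i, 0 ≤ wp i) (hwm : ∀ i, 0 ≤ wm i)
    (x : N → ℝ) (hx : ∀ j', x j' = 0 ∨ x j' = 1)
    (hlocal : ∀ j, 0 ≤ penObj ML MG ME a b c wp wm (flipVar x j) - penObj ML MG ME a b c wp wm x)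
    (j₁ j₂ : N) (hne : j₁ ≠ j₂) (h1 : x j₁ = 0) (h2 : x j₂ = 0) :
    (penObj ML MG ME a b c wp wm (flipVar (flipVar x j₁) j₂) - penObj ML MG ME a b c wp wm x
      = (penObj ML MG ME a b c wp wm (flipVar x j₁) - penObj ML MG ME a b c wp wm x)
        + (penObj ML MG ME a b c wp wm (flipVar x j₂) - penObj ML MG ME a b c wp wm x)
        + ∑ i ∈ (Sset a j₁ ∩ Sset a j₂ ∩ (ML ∪ ME)).filter
            (fun i => sLHS a x i = (b i : ℝ) - 1), wp i
        + ∑ i ∈ (Sset a j₁ ∩ Sset a j₂ ∩ (MG ∪ ME)).filter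
            (fun i => sLHS a x i = (b i : ℝ) - 1), wm i) ∧
    0 ≤ penObj ML MG ME a b c wp wm (flipVar (flipVar x j₁) j₂) - penObj ML MG ME a b c wp wm x := by
  classical
  set y1 := flipVar x j₁ with hy1
  set y2 := flipVar x j₂ with hy2
  set y12 := flipVar y1 j₂ with hy12
  -- sLHS values
  have hs1 : ∀ i, sLHS a y1 i = sLHS a x i + a i j₁ := by
    intro i; rw [hy1, sLHS_flip', h1]; ring
  have hs2 : ∀ i, sLHS a y2 i = sLHS a x i + a i j₂ := by
    intro i; rw [hy2, sLHS_flip', h2]; ring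
  have hy1j2 : y1 j₂ = 0 := by
    rw [hy1]; unfold flipVar; rw [Function.update_of_ne (Ne.symm hne)]; exact h2
  have hs12 : ∀ i, sLHS a y12 i = sLHS a x i + a i j₁ + a i j₂ := by
    intro i; rw [hy12, sLHS_flip', hy1j2, hs1 i]; ring
  -- difference formula
  have hdiff : ∀ y : N → ℝ,
      penObj ML MG ME a b c wp wm y - penObj ML MG ME a b c wp wm x
        = (∑ j, c j * (y j - x j))
          + (∑ i ∈ ML ∪ ME, wp i *
              (max (sLHS a y i - (b i : ℝ)) 0 - max (sLHS a x i - (b i : ℝ)) 0))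
          + (∑ i ∈ MG ∪ ME, wm i *
              (max ((b i : ℝ) - sLHS a y i) 0 - max ((b i : ℝ) - sLHS a x i) 0)) := by
    intro y
    simp only [penObj, mul_sub, Finset.sum_sub_distrib]
    ring
  -- linear part
  have hc : (∑ j, c j * (y12 j - x j))
      = (∑ j, c j * (y1 j - x j)) + (∑ j, c j * (y2 j - x j)) := by
    rw [← Finset.sum_add_distrib]
    refine Finset.sum_congr rfl fun j _ => ?_
    have hv : y12 j - x j = (y1 j - x j) + (y2 j - x j) := by
      rcases eq_or_ne j j₁ with rfl | hj1
      · have e12 : y12 j = y1 j := by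
          rw [hy12]; unfold flipVar; rw [Function.update_of_ne hne]
        have e2 : y2 j = x j := by
          rw [hy2]; unfold flipVar; rw [Function.update_of_ne hne]
        rw [e12, e2]; ring
      · rcases eq_or_ne j j₂ with rfl | hj2
        · have e1 : y1 j = x j := by
            rw [hy1]; unfold flipVar; rw [Function.update_of_ne (Ne.symm hne)]
          have e12 : y12 j = 1 - y1 j := by
            rw [hy12]; unfold flipVar; rw [Function.update_self]
          have e2 : y2 j = 1 - x j := by
            rw [hy2]; unfold flipVar; rw [Function.update_self]
          rw [e12, e2, e1]; ring
        · have e1 : y1 j = x j := by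
            rw [hy1]; unfold flipVar; rw [Function.update_of_ne hj1]
          have e2 : y2 j = x j := by
            rw [hy2]; unfold flipVar; rw [Function.update_of_ne hj2]
          have e12 : y12 j = y1 j := by
            rw [hy12]; unfold flipVar; rw [Function.update_of_ne hj2]
          rw [e12, e1, e2]; ring
    rw [hv]; ring
  -- plus penalty part
  have hp : (∑ i ∈ ML ∪ ME, wp i *
        (max (sLHS a y12 i - (b i : ℝ)) 0 - max (sLHS a x i - (b i : ℝ)) 0))
      = (∑ i ∈ ML ∪ ME, wp i *
          (max (sLHS a y1 i - (b i : ℝ)) 0 - max (sLHS a x i - (b i : ℝ)) 0))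
        + (∑ i ∈ ML ∪ ME, wp i *
          (max (sLHS a y2 i - (b i : ℝ)) 0 - max (sLHS a x i - (b i : ℝ)) 0))
        + (∑ i ∈ ML ∪ ME,
            if a i j₁ = 1 ∧ a i j₂ = 1 ∧ sLHS a x i = (b i : ℝ) - 1 then wp i else 0) := by
    rw [← Finset.sum_add_distrib, ← Finset.sum_add_distrib]
    refine Finset.sum_congr rfl fun i _ => ?_
    rw [hs12 i, hs1 i, hs2 i]
    obtain ⟨m, hm⟩ := sLHS_nat' a x ha hx i
    rcases ha i j₁ with hA1 | hA1 <;> rcases ha i j₂ with hA2 | hA2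
    · rw [hA1, hA2, if_neg (by norm_num)]; ring_nf
    · rw [hA1, hA2, if_neg (by norm_num)]; ring_nf
    · rw [hA1, hA2, if_neg (by norm_num)]; ring_nf
    · rw [hA1, hA2, hm]
      have hcond : ((1:ℝ) = 1 ∧ (1:ℝ) = 1 ∧ (m:ℝ) = (b i : ℝ) - 1)
          ↔ ((m:ℝ) = (b i : ℝ) - 1) := by tauto
      rw [if_congr hcond rfl rfl]
      exact key_plus m (b i) (wp i)
  -- minus penalty part
  have hm' : (∑ i ∈ MG ∪ ME, wm i *
        (max ((b i : ℝ) - sLHS a y12 i) 0 - max ((b i : ℝ) - sLHS a x i) 0))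
      = (∑ i ∈ MG ∪ ME, wm i *
          (max ((b i : ℝ) - sLHS a y1 i) 0 - max ((b i : ℝ) - sLHS a x i) 0))
        + (∑ i ∈ MG ∪ ME, wm i *
          (max ((b i : ℝ) - sLHS a y2 i) 0 - max ((b i : ℝ) - sLHS a x i) 0))
        + (∑ i ∈ MG ∪ ME,
            if a i j₁ = 1 ∧ a i j₂ = 1 ∧ sLHS a x i = (b i : ℝ) - 1 then wm i else 0) := by
    rw [← Finset.sum_add_distrib, ← Finset.sum_add_distrib]
    refine Finset.sum_congr rfl fun i _ => ?_
    rw [hs12 i, hs1 i, hs2 i]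
    obtain ⟨m, hm⟩ := sLHS_nat' a x ha hx i
    rcases ha i j₁ with hA1 | hA1 <;> rcases ha i j₂ with hA2 | hA2
    · rw [hA1, hA2, if_neg (by norm_num)]; ring_nf
    · rw [hA1, hA2, if_neg (by norm_num)]; ring_nf
    · rw [hA1, hA2, if_neg (by norm_num)]; ring_nf
    · rw [hA1, hA2, hm]
      have hcond : ((1:ℝ) = 1 ∧ (1:ℝ) = 1 ∧ (m:ℝ) = (b i : ℝ) - 1)
          ↔ ((m:ℝ) = (b i : ℝ) - 1) := by tauto
      rw [if_congr hcond rfl rfl]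
      have := key_minus m (b i) (wm i)
      convert this using 3
  -- correction sums as if-sums
  have hfilter : ∀ (T : Finset M),
      (Sset a j₁ ∩ Sset a j₂ ∩ T).filter (fun i => sLHS a x i = (b i : ℝ) - 1)
        = T.filter (fun i => a i j₁ = 1 ∧ a i j₂ = 1 ∧ sLHS a x i = (b i : ℝ) - 1) := by
    intro T
    ext i
    simp only [Sset, Finset.mem_filter, Finset.mem_inter, Finset.mem_univ, true_and]
    tauto
  have hC1 : (∑ i ∈ (Sset a j₁ ∩ Sset a j₂ ∩ (ML ∪ ME)).filter
        (fun i => sLHS a x i = (b i : ℝ) - 1), wp i)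
      = ∑ i ∈ ML ∪ ME,
          if a i j₁ = 1 ∧ a i j₂ = 1 ∧ sLHS a x i = (b i : ℝ) - 1 then wp i else 0 := by
    rw [hfilter, Finset.sum_filter]
  have hC2 : (∑ i ∈ (Sset a j₁ ∩ Sset a j₂ ∩ (MG ∪ ME)).filter
        (fun i => sLHS a x i = (b i : ℝ) - 1), wm i)
      = ∑ i ∈ MG ∪ ME,
          if a i j₁ = 1 ∧ a i j₂ = 1 ∧ sLHS a x i = (b i : ℝ) - 1 then wm i else 0 := by
    rw [hfilter, Finset.sum_filter]
  have heq : penObj ML MG ME a b c wp wm y12 - penObj ML MG ME a b c wp wm x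
      = (penObj ML MG ME a b c wp wm y1 - penObj ML MG ME a b c wp wm x)
        + (penObj ML MG ME a b c wp wm y2 - penObj ML MG ME a b c wp wm x)
        + (∑ i ∈ (Sset a j₁ ∩ Sset a j₂ ∩ (ML ∪ ME)).filter
            (fun i => sLHS a x i = (b i : ℝ) - 1), wp i)
        + (∑ i ∈ (Sset a j₁ ∩ Sset a j₂ ∩ (MG ∪ ME)).filter
            (fun i => sLHS a x i = (b i : ℝ) - 1), wm i) := by
    rw [hdiff y12, hdiff y1, hdiff y2, hC1, hC2]
    linarith [hc, hp, hm']
  refine ⟨heq, ?_⟩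
  rw [heq]
  have hC1n : 0 ≤ ∑ i ∈ (Sset a j₁ ∩ Sset a j₂ ∩ (ML ∪ ME)).filter
      (fun i => sLHS a x i = (b i : ℝ) - 1), wp i :=
    Finset.sum_nonneg fun i _ => hwp i
  have hC2n : 0 ≤ ∑ i ∈ (Sset a j₁ ∩ Sset a j₂ ∩ (MG ∪ ME)).filter
      (fun i => sLHS a x i = (b i : ℝ) - 1), wm i :=
    Finset.sum_nonneg fun i _ => hwm i
  have := hlocal j₁
  have := hlocal j₂
  rw [← hy1] at *
  linarith [hlocal j₁, hlocal j₂]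
end

section
/- (Lemma 1) If a binary solution x is locally optimal with respect to the 1-flip neighborhood (Δz̃_j(x) ≥ 0 for all j), then for distinct indices j₁, j₂, the simultaneous flip of x_{j₁} and x_{j₂} strictly improves z̃ (Δz̃_{j₁,j₂}(x) < 0) only if S_{j₁} ∩ S_{j₂} ≠ ∅ and x_{j₁} ≠ x_{j₂}. -/
open scoped Classical BigOperators

/-- auxiliary: sum with an updated function -/
lemma sum_mul_update {N : Type*} [Fintype N] [DecidableEq N] (f x : N → ℝ) (j : N) (v : ℝ) :
    ∑ j', f j' * Function.update x j v j' = (∑ j', f j' * x j') + f j * (v - x j) := by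
  have h : ∀ j' ∈ Finset.univ, f j' * Function.update x j v j'
      = f j' * x j' + (if j' = j then f j * (v - x j) else 0) := by
    intro j' _
    by_cases h : j' = j
    · subst h; simp [Function.update_self]; ring
    · simp [Function.update_of_ne h, h]
  rw [Finset.sum_congr rfl h, Finset.sum_add_distrib]
  simp

/-- per-constraint penalty function -/
noncomputable def pen {M : Type*} (ML MG ME : Finset M) (b : M → ℕ) (wp wm : M → ℝ)
    (i : M) (t : ℝ) : ℝ :=
  (if i ∈ ML ∪ ME then wp i else 0) * max (t - (b i : ℝ)) 0
    + (if i ∈ MG ∪ ME then wm i else 0) * max ((b i : ℝ) - t) 0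

lemma penObj_eq {M N : Type*} [Fintype M] [Fintype N]
    (ML MG ME : Finset M) (a : M → N → ℝ) (b : M → ℕ) (c : N → ℝ)
    (wp wm : M → ℝ) (x : N → ℝ) :
    penObj ML MG ME a b c wp wm x
      = (∑ j, c j * x j) + ∑ i, pen ML MG ME b wp wm i (sLHS a x i) := by
  unfold penObj pen
  rw [Finset.sum_add_distrib]
  have hA : ∑ i, (if i ∈ ML ∪ ME then wp i else 0) * max (sLHS a x i - (b i : ℝ)) 0
      = ∑ i ∈ ML ∪ ME, wp i * max (sLHS a x i - (b i : ℝ)) 0 := by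
    simp only [ite_mul, zero_mul]
    rw [Finset.sum_ite_mem, Finset.univ_inter]
  have hB : ∑ i, (if i ∈ MG ∪ ME then wm i else 0) * max ((b i : ℝ) - sLHS a x i) 0
      = ∑ i ∈ MG ∪ ME, wm i * max ((b i : ℝ) - sLHS a x i) 0 := by
    simp only [ite_mul, zero_mul]
    rw [Finset.sum_ite_mem, Finset.univ_inter]
  rw [hA, hB]; ring

lemma max_conv (w p q r : ℝ) (hw : 0 ≤ w) (h : p + r = 2 * q) :
    2 * (w * max q 0) ≤ w * max p 0 + w * max r 0 := by
  have hp0 : (0:ℝ) ≤ max p 0 := le_max_right _ _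
  have hr0 : (0:ℝ) ≤ max r 0 := le_max_right _ _
  have hp : p ≤ max p 0 := le_max_left _ _
  have hr : r ≤ max r 0 := le_max_left _ _
  rcases le_total q 0 with hq | hq
  · rw [max_eq_right hq]; nlinarith
  · rw [max_eq_left hq]; nlinarith

lemma pen_conv {M : Type*} (ML MG ME : Finset M) (b : M → ℕ) (wp wm : M → ℝ)
    (hwp : ∀ i, 0 ≤ wp i) (hwm : ∀ i, 0 ≤ wm i) (i : M) (p q r : ℝ) (h : p + r = 2 * q) :
    2 * pen ML MG ME b wp wm i q ≤ pen ML MG ME b wp wm i p + pen ML MG ME b wp wm i r := by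
  unfold pen
  have hw1 : (0:ℝ) ≤ (if i ∈ ML ∪ ME then wp i else 0) := by
    split_ifs; exacts [hwp i, le_refl 0]
  have hw2 : (0:ℝ) ≤ (if i ∈ MG ∪ ME then wm i else 0) := by
    split_ifs; exacts [hwm i, le_refl 0]
  have h1 := max_conv _ (p - (b i : ℝ)) (q - (b i : ℝ)) (r - (b i : ℝ)) hw1 (by linarith)
  have h2 := max_conv _ ((b i : ℝ) - p) ((b i : ℝ) - q) ((b i : ℝ) - r) hw2 (by linarith)
  linarith

lemma core {M N : Type*} [Fintype M] [Fintype N] [DecidableEq N]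
    (ML MG ME : Finset M) (a : M → N → ℝ) (b : M → ℕ) (c : N → ℝ)
    (wp wm : M → ℝ) (hwp : ∀ i, 0 ≤ wp i) (hwm : ∀ i, 0 ≤ wm i)
    (x : N → ℝ) (j₁ j₂ : N) (hne : j₁ ≠ j₂)
    (H : ∀ i, a i j₁ * (1 - 2 * x j₁) = 0 ∨ a i j₂ * (1 - 2 * x j₂) = 0
        ∨ a i j₁ * (1 - 2 * x j₁) = a i j₂ * (1 - 2 * x j₂)) :
    penObj ML MG ME a b c wp wm (flipVar x j₁) + penObj ML MG ME a b c wp wm (flipVar x j₂)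
      ≤ penObj ML MG ME a b c wp wm (flipVar (flipVar x j₁) j₂)
        + penObj ML MG ME a b c wp wm x := by
  set u : M → ℝ := fun i => a i j₁ * (1 - 2 * x j₁) with hu
  set v : M → ℝ := fun i => a i j₂ * (1 - 2 * x j₂) with hv
  have hs1 : ∀ i, sLHS a (flipVar x j₁) i = sLHS a x i + u i := by
    intro i; unfold flipVar sLHS
    rw [sum_mul_update]; simp only [hu]; ring
  have hs2 : ∀ i, sLHS a (flipVar x j₂) i = sLHS a x i + v i := by
    intro i; unfold flipVar sLHS
    rw [sum_mul_update]; simp only [hv]; ring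
  have hy : Function.update x j₁ (1 - x j₁) j₂ = x j₂ := Function.update_of_ne (Ne.symm hne) _ _
  have hs12 : ∀ i, sLHS a (flipVar (flipVar x j₁) j₂) i = sLHS a x i + u i + v i := by
    intro i; unfold flipVar sLHS
    rw [sum_mul_update, sum_mul_update, hy]; simp only [hu, hv]; ring
  have hc1 : ∑ j', c j' * (flipVar x j₁) j' = (∑ j', c j' * x j') + c j₁ * (1 - 2 * x j₁) := by
    unfold flipVar; rw [sum_mul_update]; ring
  have hc2 : ∑ j', c j' * (flipVar x j₂) j' = (∑ j', c j' * x j') + c j₂ * (1 - 2 * x j₂) := by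
    unfold flipVar; rw [sum_mul_update]; ring
  have hc12 : ∑ j', c j' * (flipVar (flipVar x j₁) j₂) j'
      = (∑ j', c j' * x j') + c j₁ * (1 - 2 * x j₁) + c j₂ * (1 - 2 * x j₂) := by
    unfold flipVar; rw [sum_mul_update, sum_mul_update, hy]; ring
  rw [penObj_eq, penObj_eq, penObj_eq, penObj_eq, hc1, hc2, hc12]
  have hsum : ∑ i, (pen ML MG ME b wp wm i (sLHS a x i + u i)
        + pen ML MG ME b wp wm i (sLHS a x i + v i))
      ≤ ∑ i, (pen ML MG ME b wp wm i (sLHS a x i + u i + v i)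
        + pen ML MG ME b wp wm i (sLHS a x i)) := by
    apply Finset.sum_le_sum
    intro i _
    rcases H i with h0 | h0 | h0
    · have h0' : u i = 0 := h0
      rw [h0']
      simp only [add_zero]
      linarith
    · have h0' : v i = 0 := h0
      rw [h0']
      simp only [add_zero]
      linarith
    · have huvi : u i = v i := h0
      rw [← huvi]
      have := pen_conv ML MG ME b wp wm hwp hwm i (sLHS a x i + u i + u i) (sLHS a x i + u i)
        (sLHS a x i) (by ring)
      linarith
  have e1 : ∑ i, pen ML MG ME b wp wm i (sLHS a (flipVar x j₁) i)
      = ∑ i, pen ML MG ME b wp wm i (sLHS a x i + u i) :=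
    Finset.sum_congr rfl (fun i _ => by rw [hs1])
  have e2 : ∑ i, pen ML MG ME b wp wm i (sLHS a (flipVar x j₂) i)
      = ∑ i, pen ML MG ME b wp wm i (sLHS a x i + v i) :=
    Finset.sum_congr rfl (fun i _ => by rw [hs2])
  have e12 : ∑ i, pen ML MG ME b wp wm i (sLHS a (flipVar (flipVar x j₁) j₂) i)
      = ∑ i, pen ML MG ME b wp wm i (sLHS a x i + u i + v i) :=
    Finset.sum_congr rfl (fun i _ => by rw [hs12])
  rw [e1, e2, e12]
  rw [Finset.sum_add_distrib, Finset.sum_add_distrib] at hsum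
  linarith

theorem stmt_7 {M N : Type*} [Fintype M] [Fintype N] [DecidableEq N]
    (ML MG ME : Finset M) (a : M → N → ℝ) (b : M → ℕ) (c : N → ℝ)
    (wp wm : M → ℝ)
    (ha : ∀ i j, a i j = 0 ∨ a i j = 1)
    (hwp : ∀ i, 0 ≤ wp i) (hwm : ∀ i, 0 ≤ wm i)
    (x : N → ℝ) (hx : ∀ j', x j' = 0 ∨ x j' = 1)
    (hlocal : ∀ j, 0 ≤ penObj ML MG ME a b c wp wm (flipVar x j) - penObj ML MG ME a b c wp wm x)
    (j₁ j₂ : N) (hne : j₁ ≠ j₂)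
    (himp : penObj ML MG ME a b c wp wm (flipVar (flipVar x j₁) j₂)
        - penObj ML MG ME a b c wp wm x < 0) :
    (Sset a j₁ ∩ Sset a j₂).Nonempty ∧ x j₁ ≠ x j₂ := by
  have h1 := hlocal j₁
  have h2 := hlocal j₂
  constructor
  · by_contra hA
    have H : ∀ i, a i j₁ * (1 - 2 * x j₁) = 0 ∨ a i j₂ * (1 - 2 * x j₂) = 0
        ∨ a i j₁ * (1 - 2 * x j₁) = a i j₂ * (1 - 2 * x j₂) := by
      intro i
      rcases ha i j₁ with h | h
      · left; rw [h]; ring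
      · rcases ha i j₂ with h' | h'
        · right; left; rw [h']; ring
        · exact absurd ⟨i, Finset.mem_inter.mpr ⟨by simp [Sset, h], by simp [Sset, h']⟩⟩ hA
    have := core ML MG ME a b c wp wm hwp hwm x j₁ j₂ hne H
    linarith
  · intro hEq
    have H : ∀ i, a i j₁ * (1 - 2 * x j₁) = 0 ∨ a i j₂ * (1 - 2 * x j₂) = 0
        ∨ a i j₁ * (1 - 2 * x j₁) = a i j₂ * (1 - 2 * x j₂) := by
      intro i
      rcases ha i j₁ with h | h
      · left; rw [h]; ring
      · rcases ha i j₂ with h' | h'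
        · right; left; rw [h']; ring
        · right; right; rw [h, h', hEq]
    have := core ML MG ME a b c wp wm hwp hwm x j₁ j₂ hne H
    linarith
end
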